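/- Let v ∈ L²((0,π), ℝ) be real-valued and define ŵ(x) = v(x) + (x − π/2)². With the Fourier coefficients c_k(f) = ∫₀^π f(x)·√(2/π)·cos(2kx) dx and s_k(f) = ∫₀^π f(x)·√(2/π)·sin(2kx) dx for k ≥ 1, and c₀(f) = ∫₀^π f(x)·(1/√π) dx, one has: for every integer k ≥ 1, c_k(v) = (k²/√(2π))·[ (c_k(ŵ)² + s_k(ŵ)²) − (c_k(v)² + s_k(v)²) − π/(2k⁴) ]; and c₀(v) = (6/π^{5/2})·[ c₀(ŵ)² − c₀(v)² − π⁵/144 ]. -/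

import Mathlib

open MeasureTheory intervalIntegral

/-- Cosine Fourier coefficient `c_k(f) = ∫₀^π f(x)·√(2/π)·cos(2kx) dx` for `k ≥ 1`. -/
noncomputable def cosCoeff (f : ℝ → ℝ) (k : ℕ) : ℝ :=
  ∫ x in (0:ℝ)..Real.pi, f x * (Real.sqrt (2 / Real.pi) * Real.cos (2 * k * x))

/-- Sine Fourier coefficient `s_k(f) = ∫₀^π f(x)·√(2/π)·sin(2kx) dx`. -/
noncomputable def sinCoeff (f : ℝ → ℝ) (k : ℕ) : ℝ :=
  ∫ x in (0:ℝ)..Real.pi, f x * (Real.sqrt (2 / Real.pi) * Real.sin (2 * k * x))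

/-- Zeroth Fourier coefficient `c₀(f) = ∫₀^π f(x)·(1/√π) dx`. -/
noncomputable def zeroCoeff (f : ℝ → ℝ) : ℝ :=
  ∫ x in (0:ℝ)..Real.pi, f x * (1 / Real.sqrt Real.pi)

namespace Stmt18Aux

open Real

lemma int_q_cos (a : ℝ) (ha : a ≠ 0) :
    ∫ x in (0:ℝ)..π, (x - π/2)^2 * Real.cos (a * x) =
      ((π/2)^2 / a * Real.sin (a*π) + π/a^2 * Real.cos (a*π) - 2/a^3 * Real.sin (a*π))
      + π/a^2 := by
  have h : ∀ x ∈ Set.uIcc (0:ℝ) π, HasDerivAt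
      (fun x => (x - π/2)^2 / a * Real.sin (a*x) + 2*(x - π/2)/a^2 * Real.cos (a*x) - 2/a^3 * Real.sin (a*x))
      ((x - π/2)^2 * Real.cos (a*x)) x := by
    intro x _
    have hs : HasDerivAt (fun x => Real.sin (a*x)) (a * Real.cos (a*x)) x := by
      exact ((Real.hasDerivAt_sin (a*x)).comp x ((hasDerivAt_id x).const_mul a)).congr_deriv (by ring)
    have hc : HasDerivAt (fun x => Real.cos (a*x)) (-(a * Real.sin (a*x))) x := by
      exact ((Real.hasDerivAt_cos (a*x)).comp x ((hasDerivAt_id x).const_mul a)).congr_deriv (by ring)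
    have h1 : HasDerivAt (fun x => (x - π/2)^2 / a) (2*(x - π/2)/a) x := by
      have : HasDerivAt (fun x : ℝ => (x - π/2)^2) (2*(x - π/2)) x := by
        exact (((hasDerivAt_id x).sub_const (π/2)).pow 2).congr_deriv (by simp)
      simpa [div_eq_mul_inv, mul_comm, mul_assoc] using this.div_const a
    have h2 : HasDerivAt (fun x => 2*(x - π/2)/a^2) (2/a^2) x := by
      have : HasDerivAt (fun x : ℝ => 2*(x - π/2)) 2 x := by
        simpa using ((hasDerivAt_id x).sub_const (π/2)).const_mul 2
      simpa using this.div_const (a^2)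
    have := ((h1.mul hs).add (h2.mul hc)).sub (hs.const_mul (2/a^3))
    refine this.congr_deriv ?_
    field_simp
    ring
  rw [intervalIntegral.integral_eq_sub_of_hasDerivAt h]
  · simp
    ring
  · apply Continuous.intervalIntegrable
    continuity

lemma int_q_sin (a : ℝ) (ha : a ≠ 0) :
    ∫ x in (0:ℝ)..π, (x - π/2)^2 * Real.sin (a * x) =
      (-((π/2)^2 / a) * Real.cos (a*π) + π/a^2 * Real.sin (a*π) + 2/a^3 * Real.cos (a*π))
      - (-((π/2)^2 / a) + 2/a^3) := by
  have h : ∀ x ∈ Set.uIcc (0:ℝ) π, HasDerivAt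
      (fun x => -((x - π/2)^2 / a) * Real.cos (a*x) + 2*(x - π/2)/a^2 * Real.sin (a*x) + 2/a^3 * Real.cos (a*x))
      ((x - π/2)^2 * Real.sin (a*x)) x := by
    intro x _
    have hs : HasDerivAt (fun x => Real.sin (a*x)) (a * Real.cos (a*x)) x := by
      exact ((Real.hasDerivAt_sin (a*x)).comp x ((hasDerivAt_id x).const_mul a)).congr_deriv (by ring)
    have hc : HasDerivAt (fun x => Real.cos (a*x)) (-(a * Real.sin (a*x))) x := by
      exact ((Real.hasDerivAt_cos (a*x)).comp x ((hasDerivAt_id x).const_mul a)).congr_deriv (by ring)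
    have h1 : HasDerivAt (fun x => -((x - π/2)^2 / a)) (-(2*(x - π/2)/a)) x := by
      have : HasDerivAt (fun x : ℝ => (x - π/2)^2) (2*(x - π/2)) x := by
        exact (((hasDerivAt_id x).sub_const (π/2)).pow 2).congr_deriv (by simp)
      have := (this.div_const a).neg
      exact this
    have h2 : HasDerivAt (fun x => 2*(x - π/2)/a^2) (2/a^2) x := by
      have : HasDerivAt (fun x : ℝ => 2*(x - π/2)) 2 x := by
        simpa using ((hasDerivAt_id x).sub_const (π/2)).const_mul 2
      simpa using this.div_const (a^2)
    have := ((h1.mul hc).add (h2.mul hs)).add (hc.const_mul (2/a^3))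
    refine this.congr_deriv ?_
    field_simp
    ring
  rw [intervalIntegral.integral_eq_sub_of_hasDerivAt h]
  · simp
    ring
  · apply Continuous.intervalIntegrable
    continuity

lemma int_q_one : ∫ x in (0:ℝ)..π, (x - π/2)^2 = π^3/12 := by
  have h : ∀ x ∈ Set.uIcc (0:ℝ) π, HasDerivAt
      (fun x => (x - π/2)^3 / 3) ((x - π/2)^2) x := by
    intro x _
    have : HasDerivAt (fun x : ℝ => (x - π/2)^3) (3*(x - π/2)^2) x := by
      exact (((hasDerivAt_id x).sub_const (π/2)).pow 3).congr_deriv (by simp)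
    simpa using this.div_const 3
  rw [intervalIntegral.integral_eq_sub_of_hasDerivAt h]
  · ring
  · apply Continuous.intervalIntegrable
    continuity

lemma sin_2kpi (k : ℕ) : Real.sin (2 * k * π) = 0 := by
  have : (2:ℝ) * k * π = ((2*k : ℕ) : ℝ) * π := by push_cast; ring
  rw [this, Real.sin_nat_mul_pi]

lemma cos_2kpi (k : ℕ) : Real.cos (2 * k * π) = 1 := by
  have : (2:ℝ) * k * π = (k : ℝ) * (2*π) := by ring
  rw [this, Real.cos_nat_mul_two_pi]

lemma int_q_cos_k (k : ℕ) (hk : 1 ≤ k) :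
    ∫ x in (0:ℝ)..π, (x - π/2)^2 * Real.cos (2 * k * x) = π / (2 * k^2) := by
  have hk0 : (k:ℝ) ≠ 0 := Nat.cast_ne_zero.2 (by omega)
  have ha : (2:ℝ) * k ≠ 0 := by positivity
  have := int_q_cos (2*k) ha
  simp only [mul_assoc] at this ⊢
  rw [this]
  rw [show (2:ℝ)*(k*π) = 2*k*π by ring, sin_2kpi, cos_2kpi]
  field_simp
  ring

lemma int_q_sin_k (k : ℕ) (hk : 1 ≤ k) :
    ∫ x in (0:ℝ)..π, (x - π/2)^2 * Real.sin (2 * k * x) = 0 := by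
  have hk0 : (k:ℝ) ≠ 0 := Nat.cast_ne_zero.2 (by omega)
  have ha : (2:ℝ) * k ≠ 0 := by positivity
  have := int_q_sin (2*k) ha
  simp only [mul_assoc] at this ⊢
  rw [this]
  rw [show (2:ℝ)*(k*π) = 2*k*π by ring, sin_2kpi, cos_2kpi]
  ring

end Stmt18Aux

open Stmt18Aux Real in
set_option maxHeartbeats 1000000 in
theorem stmt18 (v : ℝ → ℝ)
    (hv : MemLp v 2 (volume.restrict (Set.Ioo (0:ℝ) Real.pi)))
    (what : ℝ → ℝ) (hwhat : ∀ x, what x = v x + (x - Real.pi / 2) ^ 2) :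
    (∀ k : ℕ, 1 ≤ k →
      cosCoeff v k = (k ^ 2 / Real.sqrt (2 * Real.pi)) *
        ((cosCoeff what k ^ 2 + sinCoeff what k ^ 2)
          - (cosCoeff v k ^ 2 + sinCoeff v k ^ 2)
          - Real.pi / (2 * k ^ 4))) ∧
    zeroCoeff v = (6 / Real.pi ^ ((5:ℝ) / 2)) *
      (zeroCoeff what ^ 2 - zeroCoeff v ^ 2 - Real.pi ^ 5 / 144) := by
  -- integrability of v on [0, π]
  have hIv : IntervalIntegrable v volume 0 π := by
    have h1 : Integrable v (volume.restrict (Set.Ioo (0:ℝ) π)) :=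
      hv.integrable (by norm_num)
    have h2 : IntegrableOn v (Set.Ioc (0:ℝ) π) := by
      rw [IntegrableOn, ← Measure.restrict_congr_set Ioo_ae_eq_Ioc]; exact h1
    exact (intervalIntegrable_iff_integrableOn_Ioc_of_le Real.pi_pos.le).mpr h2
  have hπ : (0:ℝ) < π := Real.pi_pos
  set c : ℝ := Real.sqrt (2 / π) with hc
  have hc2 : c ^ 2 = 2 / π := Real.sq_sqrt (by positivity)
  have h22 : (2:ℝ) * π = 2/π * π^2 := by field_simp
  have hcπ : c * π = Real.sqrt (2 * π) := by
    rw [hc, h22, Real.sqrt_mul (by positivity) (π^2), Real.sqrt_sq hπ.le]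
  have hc0 : 0 < c := Real.sqrt_pos.2 (by positivity)
  have hsπ : (0:ℝ) < Real.sqrt (2 * π) := Real.sqrt_pos.2 (by positivity)
  constructor
  · intro k hk
    have hk0 : (k:ℝ) ≠ 0 := Nat.cast_ne_zero.2 (by omega)
    -- integrability of the various integrands
    have hIvc : IntervalIntegrable (fun x => v x * (c * Real.cos (2*k*x))) volume 0 π := by
      apply hIv.mul_continuousOn
      exact (continuous_const.mul (Real.continuous_cos.comp
        (continuous_const.mul continuous_id))).continuousOn
    have hIvs : IntervalIntegrable (fun x => v x * (c * Real.sin (2*k*x))) volume 0 π := by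
      apply hIv.mul_continuousOn
      exact (continuous_const.mul (Real.continuous_sin.comp
        (continuous_const.mul continuous_id))).continuousOn
    have hIqc : IntervalIntegrable (fun x => (x - π/2)^2 * (c * Real.cos (2*k*x))) volume 0 π := by
      apply Continuous.intervalIntegrable; continuity
    have hIqs : IntervalIntegrable (fun x => (x - π/2)^2 * (c * Real.sin (2*k*x))) volume 0 π := by
      apply Continuous.intervalIntegrable; continuity
    -- decompose the coefficients of what
    have hcw : cosCoeff what k = cosCoeff v k + c * (π / (2 * k^2)) := by
      unfold cosCoeff
      simp only [hwhat, add_mul]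
      rw [intervalIntegral.integral_add hIvc hIqc]
      congr 1
      have he : (fun x => (x - π/2)^2 * (c * Real.cos (2*k*x)))
          = fun x => c * ((x - π/2)^2 * Real.cos (2*k*x)) := by funext x; ring
      rw [he, intervalIntegral.integral_const_mul, int_q_cos_k k hk]
    have hsw : sinCoeff what k = sinCoeff v k := by
      unfold sinCoeff
      simp only [hwhat, add_mul]
      rw [intervalIntegral.integral_add hIvs hIqs]
      have he : (fun x => (x - π/2)^2 * (c * Real.sin (2*k*x)))
          = fun x => c * ((x - π/2)^2 * Real.sin (2*k*x)) := by funext x; ring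
      rw [he, intervalIntegral.integral_const_mul, int_q_sin_k k hk]
      ring
    rw [hcw, hsw, ← hcπ]
    set A := cosCoeff v k
    set S := sinCoeff v k
    have hcc : c^2 * π^2 = 2 * π := by
      rw [hc2]; field_simp
    have hbr : (A + c * (π / (2 * (k:ℝ)^2)))^2 + S^2 - (A^2 + S^2) - π/(2*(k:ℝ)^4)
        = A * (c * π) / (k:ℝ)^2 := by
      field_simp
      linear_combination hcc
    rw [hbr]
    field_simp
  · -- zero coefficient
    have hIv0 : IntervalIntegrable (fun x => v x * (1 / Real.sqrt π)) volume 0 π :=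
      hIv.mul_continuousOn continuous_const.continuousOn
    have hIq0 : IntervalIntegrable (fun x => (x - π/2)^2 * (1 / Real.sqrt π)) volume 0 π := by
      apply Continuous.intervalIntegrable; continuity
    have hzw : zeroCoeff what = zeroCoeff v + π^3/12 * (1 / Real.sqrt π) := by
      unfold zeroCoeff
      simp only [hwhat, add_mul]
      rw [intervalIntegral.integral_add hIv0 hIq0]
      congr 1
      rw [intervalIntegral.integral_mul_const, int_q_one]
    rw [hzw]
    have ht : Real.sqrt π ^ 2 = π := Real.sq_sqrt hπ.le
    have ht0 : Real.sqrt π ≠ 0 := ne_of_gt (Real.sqrt_pos.2 hπ)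
    have hr : π ^ ((5:ℝ)/2) = π^2 * Real.sqrt π := by
      rw [show (5:ℝ)/2 = (2:ℕ) + (1/2 : ℝ) by norm_num,
        Real.rpow_add hπ, Real.rpow_natCast, ← Real.sqrt_eq_rpow]
    rw [hr]
    set Z := zeroCoeff v
    set t := Real.sqrt π
    have hbr : (Z + π^3/12 * (1/t))^2 - Z^2 - π^5/144 = Z * π^3 / (6*t) := by
      field_simp
      linear_combination (-864*π^5) * ht
    rw [hbr]
    field_simp
    linear_combination Z * ht
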